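/- Let n ≥ 1, r ∈ (0,1), and let λ_1, …, λ_n ∈ ℂ with |λ_i| ≤ r for all i. Let M be the n×n lower-triangular matrix with entries M_{ij} = 0 for i < j, M_{ii} = λ_i, and M_{ij} = (1−|λ_i|²)^{1/2}·(1−|λ_j|²)^{1/2}·∏_{μ=j+1}^{i−1}(−conj(λ_μ)) for i > j (the empty product being 1). Then for every ζ ∈ ℂ with |ζ| ≥ 1, the matrix ζI − M is invertible and its inverse satisfies the entrywise bound |((ζI − M)^{-1})_{ij}| ≤ (1/(1−r))·(X_{1+r})_{ij} for all 1 ≤ i, j ≤ n; consequently ‖(ζI − M)^{-1}‖ ≤ (1/(1−r))·‖X_{1+r}‖. -/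

import Mathlib

/-- The operator norm of a complex `n × n` matrix induced by the Euclidean norm on `ℂⁿ`. -/
noncomputable def matNorm {n : ℕ} (T : Matrix (Fin n) (Fin n) ℂ) : ℝ :=
  ‖Matrix.toEuclideanCLM (𝕜 := ℂ) T‖

/-- The `n × n` lower-triangular Toeplitz matrix `X_β`. -/
noncomputable def Xmat (n : ℕ) (β : ℝ) : Matrix (Fin n) (Fin n) ℂ :=
  Matrix.of fun i j => if (i : ℕ) < (j : ℕ) then 0 else if (i : ℕ) = (j : ℕ) then 1 else (β : ℂ)

set_option synthInstance.maxHeartbeats 1000000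
set_option maxHeartbeats 1000000

noncomputable def sv {n : ℕ} (l : Fin n → ℂ) (i : Fin n) : ℝ :=
  Real.sqrt (1 - ‖l i‖ ^ 2)
noncomputable def dv {n : ℕ} (l : Fin n → ℂ) (ζ : ℂ) (i : Fin n) : ℂ := ζ - l i
noncomputable def av {n : ℕ} (l : Fin n → ℂ) (μ : Fin n) : ℂ := -(starRingEnd ℂ) (l μ)
noncomputable def cv {n : ℕ} (l : Fin n → ℂ) (ζ : ℂ) (μ : Fin n) : ℂ :=
  (1 - (starRingEnd ℂ) (l μ) * ζ) * (dv l ζ μ)⁻¹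

noncomputable def Bmat {n : ℕ} (l : Fin n → ℂ) (ζ : ℂ) : Matrix (Fin n) (Fin n) ℂ :=
  Matrix.of fun i j =>
    if (i : ℕ) < (j : ℕ) then 0
    else if (i : ℕ) = (j : ℕ) then (dv l ζ i)⁻¹
    else ((sv l i : ℂ) * (sv l j : ℂ)) * (dv l ζ i)⁻¹ * (dv l ζ j)⁻¹ *
      ∏ μ ∈ Finset.Ioo j i, cv l ζ μ

lemma Bmat_apply {n : ℕ} (l : Fin n → ℂ) (ζ : ℂ) (i j : Fin n) :
    Bmat l ζ i j =
      if (i : ℕ) < (j : ℕ) then 0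
      else if (i : ℕ) = (j : ℕ) then (dv l ζ i)⁻¹
      else ((sv l i : ℂ) * (sv l j : ℂ)) * (dv l ζ i)⁻¹ * (dv l ζ j)⁻¹ *
        ∏ μ ∈ Finset.Ioo j i, cv l ζ μ := rfl

lemma filter_lt {n : ℕ} (j k i : Fin n) (hjk : j < k) (hki : k < i) :
    (Finset.Ioo j i).filter (· < k) = Finset.Ioo j k := by
  ext x
  simp only [Finset.mem_filter, Finset.mem_Ioo]
  exact ⟨fun ⟨⟨h1, _⟩, h3⟩ => ⟨h1, h3⟩, fun ⟨h1, h2⟩ => ⟨⟨h1, h2.trans hki⟩, h2⟩⟩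

lemma filter_gt {n : ℕ} (j k i : Fin n) (hjk : j < k) (hki : k < i) :
    (Finset.Ioo j i).filter (k < ·) = Finset.Ioo k i := by
  ext x
  simp only [Finset.mem_filter, Finset.mem_Ioo]
  exact ⟨fun ⟨⟨_, h2⟩, h3⟩ => ⟨h3, h2⟩, fun ⟨h1, h2⟩ => ⟨⟨hjk.trans h1, h2⟩, h1⟩⟩

lemma sv_sq {n : ℕ} (l : Fin n → ℂ) (i : Fin n) (h : ‖l i‖ < 1) :
    ((sv l i : ℝ) : ℂ) ^ 2 = 1 - (starRingEnd ℂ) (l i) * l i := by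
  have h0 : (0:ℝ) ≤ 1 - ‖l i‖ ^ 2 := by nlinarith [norm_nonneg (l i)]
  have h1 : (sv l i) ^ 2 = 1 - ‖l i‖ ^ 2 := Real.sq_sqrt h0
  have h2 : ((sv l i : ℝ) : ℂ) ^ 2 = ((1 - ‖l i‖ ^ 2 : ℝ) : ℂ) := by
    rw [← h1]; push_cast; ring
  rw [h2]
  push_cast
  rw [← Complex.ofReal_pow, Complex.sq_norm, Complex.normSq_eq_conj_mul_self]
lemma cv_sub_av {n : ℕ} (l : Fin n → ℂ) (ζ : ℂ) (k : Fin n)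
    (hd : dv l ζ k ≠ 0) (h : ‖l k‖ < 1) :
    cv l ζ k - av l k = ((sv l k : ℝ) : ℂ) ^ 2 * (dv l ζ k)⁻¹ := by
  rw [sv_sq l k h, cv, av, dv] at *
  field_simp
  ring

open Finset in
lemma tele {α : Type*} [LinearOrder α] [DecidableEq α] (s : Finset α) (c a : α → ℂ) :
    (∏ μ ∈ s, c μ) - (∏ μ ∈ s, a μ) =
      ∑ k ∈ s, (c k - a k) * (∏ μ ∈ s.filter (· < k), c μ) * (∏ μ ∈ s.filter (k < ·), a μ) := by
  induction s using Finset.induction_on_max with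
  | empty => simp
  | insert b s hb ih =>
    have hbs : b ∉ s := fun h => lt_irrefl b (hb b h)
    rw [Finset.prod_insert hbs, Finset.prod_insert hbs, Finset.sum_insert hbs]
    have h1 : (insert b s).filter (· < b) = s := by
      ext x; simp only [Finset.mem_filter, Finset.mem_insert]
      constructor
      · rintro ⟨h | h, hx⟩
        · exact absurd hx (by simp [h])
        · exact h
      · intro h; exact ⟨Or.inr h, hb x h⟩
    have h2 : (insert b s).filter (b < ·) = ∅ := by
      ext x; simp only [Finset.mem_filter, Finset.mem_insert, Finset.notMem_empty, iff_false]
      rintro ⟨h | h, hx⟩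
      · exact lt_irrefl b (h ▸ hx)
      · exact absurd hx (not_lt.mpr (hb x h).le)
    have h3 : ∀ k ∈ s, (insert b s).filter (· < k) = s.filter (· < k) := by
      intro k hk; ext x
      simp only [Finset.mem_filter, Finset.mem_insert]
      constructor
      · rintro ⟨h | h, hx⟩
        · exact absurd (h ▸ hx) (not_lt.mpr (hb k hk).le)
        · exact ⟨h, hx⟩
      · rintro ⟨h, hx⟩; exact ⟨Or.inr h, hx⟩
    have h4 : ∀ k ∈ s, (insert b s).filter (k < ·) = insert b (s.filter (k < ·)) := by
      intro k hk; ext x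
      simp only [Finset.mem_filter, Finset.mem_insert]
      constructor
      · rintro ⟨h | h, hx⟩
        · exact Or.inl h
        · exact Or.inr ⟨h, hx⟩
      · rintro (h | ⟨h, hx⟩)
        · exact ⟨Or.inl h, h ▸ hb k hk⟩
        · exact ⟨Or.inr h, hx⟩
    rw [h1, h2]
    rw [Finset.sum_congr rfl (fun k hk => by
      rw [h3 k hk, h4 k hk, Finset.prod_insert (fun h => hbs (Finset.filter_subset _ _ h))])]
    simp only [Finset.prod_empty, mul_one]
    have : ∑ k ∈ s, (c k - a k) * (∏ μ ∈ s.filter (· < k), c μ) * (a b * ∏ μ ∈ s.filter (k < ·), a μ)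
        = a b * ∑ k ∈ s, (c k - a k) * (∏ μ ∈ s.filter (· < k), c μ) * (∏ μ ∈ s.filter (k < ·), a μ) := by
      rw [Finset.mul_sum]; exact Finset.sum_congr rfl fun k _ => by ring
    rw [this, ← ih]
    ring

open Finset in
lemma AB_one {n : ℕ} (l : Fin n → ℂ) (ζ : ℂ) (M : Matrix (Fin n) (Fin n) ℂ)
    (hM : ∀ i j : Fin n, M i j =
      if (i : ℕ) < (j : ℕ) then 0
      else if (i : ℕ) = (j : ℕ) then l i
      else ((Real.sqrt (1 - ‖l i‖ ^ 2) : ℂ) *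
          (Real.sqrt (1 - ‖l j‖ ^ 2) : ℂ)) *
        ∏ μ ∈ Finset.Ioo j i, (-(starRingEnd ℂ) (l μ)))
    (hd : ∀ i, dv l ζ i ≠ 0) (hl1 : ∀ i, ‖l i‖ < 1) :
    (ζ • (1 : Matrix (Fin n) (Fin n) ℂ) - M) * Bmat l ζ = 1 := by
  set A := ζ • (1 : Matrix (Fin n) (Fin n) ℂ) - M with hA
  have hAe : ∀ i k : Fin n, A i k = (if i = k then ζ else 0) - M i k := by
    intro i k
    simp [hA, Matrix.sub_apply, Matrix.smul_apply, Matrix.one_apply]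
  have hA0 : ∀ i k : Fin n, i < k → A i k = 0 := by
    intro i k hik
    rw [hAe, if_neg (Fin.ne_of_lt hik), hM, if_pos (show (i:ℕ) < (k:ℕ) from hik)]
    ring
  have hB0 : ∀ k j : Fin n, k < j → Bmat l ζ k j = 0 := by
    intro k j hkj
    rw [Bmat_apply, if_pos (by exact_mod_cast hkj)]
  ext i j
  rw [Matrix.mul_apply, Matrix.one_apply]
  rcases lt_trichotomy i j with hij | hij | hij
  · rw [if_neg (Fin.ne_of_lt hij)]
    apply Finset.sum_eq_zero
    intro k _
    rcases le_or_gt k i with hk | hk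
    · rw [hB0 k j (lt_of_le_of_lt hk hij), mul_zero]
    · rw [hA0 i k hk, zero_mul]
  · subst hij
    rw [if_pos rfl]
    rw [Finset.sum_eq_single i]
    · have h1 : A i i = dv l ζ i := by
        rw [hAe, if_pos rfl, hM, if_neg (lt_irrefl _), if_pos rfl, dv]
      have h2 : Bmat l ζ i i = (dv l ζ i)⁻¹ := by
        rw [Bmat_apply, if_neg (lt_irrefl _), if_pos rfl]
      rw [h1, h2, mul_inv_cancel₀ (hd i)]
    · intro k _ hk
      rcases lt_or_gt_of_ne hk with h | h
      · rw [hB0 k i h, mul_zero]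
      · rw [hA0 i k h, zero_mul]
    · intro h; exact absurd (Finset.mem_univ i) h
  · rw [if_neg (Fin.ne_of_gt hij)]
    have hij' : (j : ℕ) < (i : ℕ) := hij
    have hsub : ∑ k, A i k * Bmat l ζ k j = ∑ k ∈ Finset.Icc j i, A i k * Bmat l ζ k j := by
      symm
      apply Finset.sum_subset (Finset.subset_univ _)
      intro k _ hk
      simp only [Finset.mem_Icc, not_and_or, not_le] at hk
      rcases hk with hk | hk
      · rw [hB0 k j hk, mul_zero]
      · rw [hA0 i k hk, zero_mul]
    rw [hsub, ← Finset.Ico_insert_right (le_of_lt hij),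
      Finset.sum_insert Finset.right_notMem_Ico,
      ← Finset.Ioo_insert_left hij, Finset.sum_insert Finset.left_notMem_Ioo]
    have hAii : A i i = dv l ζ i := by
      rw [hAe, if_pos rfl, hM, if_neg (lt_irrefl _), if_pos rfl, dv]
    have hBij : Bmat l ζ i j =
        ((sv l i : ℂ) * (sv l j : ℂ)) * (dv l ζ i)⁻¹ * (dv l ζ j)⁻¹ *
          ∏ μ ∈ Finset.Ioo j i, cv l ζ μ := by
      rw [Bmat_apply, if_neg (by omega), if_neg (by omega)]
    have hAij : A i j = -(((sv l i : ℂ) * (sv l j : ℂ)) * ∏ μ ∈ Finset.Ioo j i, av l μ) := by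
      rw [hAe, if_neg (Fin.ne_of_gt hij), hM, if_neg (by omega), if_neg (by omega)]
      simp only [av, sv]
      ring
    have hBjj : Bmat l ζ j j = (dv l ζ j)⁻¹ := by
      rw [Bmat_apply, if_neg (lt_irrefl _), if_pos rfl]
    have key : (∏ μ ∈ Finset.Ioo j i, cv l ζ μ) - (∏ μ ∈ Finset.Ioo j i, av l μ)
        = ∑ k ∈ Finset.Ioo j i, ((sv l k : ℂ) ^ 2 * (dv l ζ k)⁻¹) *
            (∏ μ ∈ Finset.Ioo j k, cv l ζ μ) * (∏ μ ∈ Finset.Ioo k i, av l μ) := by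
      rw [tele]
      refine Finset.sum_congr rfl fun k hk => ?_
      obtain ⟨hjk, hki⟩ := Finset.mem_Ioo.mp hk
      rw [filter_lt j k i hjk hki, filter_gt j k i hjk hki, cv_sub_av l ζ k (hd k) (hl1 k)]
    have hterm : ∀ k ∈ Finset.Ioo j i, A i k * Bmat l ζ k j =
        -(((sv l i : ℂ) * (sv l j : ℂ)) * (dv l ζ j)⁻¹) *
          (((sv l k : ℂ) ^ 2 * (dv l ζ k)⁻¹) * (∏ μ ∈ Finset.Ioo j k, cv l ζ μ) *
            (∏ μ ∈ Finset.Ioo k i, av l μ)) := by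
      intro k hk
      obtain ⟨hjk, hki⟩ := Finset.mem_Ioo.mp hk
      have hjk' : (j:ℕ) < (k:ℕ) := hjk
      have hki' : (k:ℕ) < (i:ℕ) := hki
      have h1 : A i k = -(((sv l i : ℂ) * (sv l k : ℂ)) * ∏ μ ∈ Finset.Ioo k i, av l μ) := by
        rw [hAe, if_neg (Fin.ne_of_gt hki), hM, if_neg (by omega), if_neg (by omega)]
        simp only [av, sv]
        ring
      have h2 : Bmat l ζ k j =
          ((sv l k : ℂ) * (sv l j : ℂ)) * (dv l ζ k)⁻¹ * (dv l ζ j)⁻¹ *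
            ∏ μ ∈ Finset.Ioo j k, cv l ζ μ := by
        rw [Bmat_apply, if_neg (by omega), if_neg (by omega)]
      rw [h1, h2]
      ring
    have hsum : ∑ k ∈ Finset.Ioo j i, A i k * Bmat l ζ k j =
        -(((sv l i : ℂ) * (sv l j : ℂ)) * (dv l ζ j)⁻¹) *
          ((∏ μ ∈ Finset.Ioo j i, cv l ζ μ) - (∏ μ ∈ Finset.Ioo j i, av l μ)) := by
      rw [key, Finset.mul_sum]
      exact Finset.sum_congr rfl hterm
    rw [hAii, hBij, hAij, hBjj, hsum]
    have hinv : dv l ζ i * (dv l ζ i)⁻¹ = 1 := mul_inv_cancel₀ (hd i)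
    linear_combination ((sv l i : ℂ) * (sv l j : ℂ) * (dv l ζ j)⁻¹ *
      (∏ μ ∈ Finset.Ioo j i, cv l ζ μ)) * hinv

lemma euclid_comp {n : ℕ} (A : Matrix (Fin n) (Fin n) ℂ) (v : EuclideanSpace ℂ (Fin n))
    (i : Fin n) : (Matrix.toEuclideanCLM (𝕜 := ℂ) A v) i = ∑ j, A i j * v j := by
  have h := Matrix.ofLp_toEuclideanCLM A v
  have : (Matrix.toEuclideanCLM (𝕜 := ℂ) A v) i
      = (Matrix.toLin' A ((WithLp.equiv 2 _) v)) i := by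
    rw [h]; rfl
  rw [this, Matrix.toLin'_apply]
  simp [Matrix.mulVec, dotProduct]

lemma matNorm_dom {n : ℕ} (T : Matrix (Fin n) (Fin n) ℂ) (S : Matrix (Fin n) (Fin n) ℝ)
    (hS : ∀ i j, 0 ≤ S i j) (h : ∀ i j, ‖T i j‖ ≤ S i j) :
    matNorm T ≤ matNorm (S.map Complex.ofReal) := by
  unfold matNorm
  refine ContinuousLinearMap.opNorm_le_bound _ (norm_nonneg _) fun x => ?_
  set S' := S.map (Complex.ofReal) with hS'
  set y : EuclideanSpace ℂ (Fin n) :=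
    (WithLp.equiv 2 (Fin n → ℂ)).symm (fun j => (‖x j‖ : ℂ)) with hy
  have hyj : ∀ j, y j = (‖x j‖ : ℂ) := fun j => rfl
  have hyx : ‖y‖ = ‖x‖ := by
    rw [EuclideanSpace.norm_eq, EuclideanSpace.norm_eq]
    congr 1
    refine Finset.sum_congr rfl fun j _ => ?_
    rw [hyj]
    simp
  have h1 : ‖Matrix.toEuclideanCLM (𝕜 := ℂ) T x‖ ≤ ‖Matrix.toEuclideanCLM (𝕜 := ℂ) S' y‖ := by
    rw [EuclideanSpace.norm_eq, EuclideanSpace.norm_eq]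
    apply Real.sqrt_le_sqrt
    refine Finset.sum_le_sum fun i _ => ?_
    have e2 : (Matrix.toEuclideanCLM (𝕜 := ℂ) S' y) i
        = ((∑ j, S i j * ‖x j‖ : ℝ) : ℂ) := by
      rw [euclid_comp]
      push_cast
      refine Finset.sum_congr rfl fun j _ => ?_
      rw [hyj, hS']
      simp [Matrix.map_apply]
    have e3 : ‖(Matrix.toEuclideanCLM (𝕜 := ℂ) T x) i‖ ≤ ∑ j, S i j * ‖x j‖ := by
      rw [euclid_comp]
      refine (norm_sum_le _ _).trans ?_
      refine Finset.sum_le_sum fun j _ => ?_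
      rw [norm_mul]
      exact mul_le_mul_of_nonneg_right (h i j) (norm_nonneg _)
    have e4 : ‖(Matrix.toEuclideanCLM (𝕜 := ℂ) S' y) i‖ = ∑ j, S i j * ‖x j‖ := by
      rw [e2, Complex.norm_real, Real.norm_of_nonneg]
      exact Finset.sum_nonneg fun j _ => mul_nonneg (hS i j) (norm_nonneg _)
    rw [e4]
    exact pow_le_pow_left₀ (norm_nonneg _) e3 2
  calc ‖Matrix.toEuclideanCLM (𝕜 := ℂ) T x‖ ≤ ‖Matrix.toEuclideanCLM (𝕜 := ℂ) S' y‖ := h1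
    _ ≤ ‖Matrix.toEuclideanCLM (𝕜 := ℂ) S'‖ * ‖y‖ := ContinuousLinearMap.le_opNorm _ _
    _ = ‖Matrix.toEuclideanCLM (𝕜 := ℂ) S'‖ * ‖x‖ := by rw [hyx]

lemma cv_abs_le_one {n : ℕ} (l : Fin n → ℂ) (ζ : ℂ) (μ : Fin n)
    (hζ : 1 ≤ ‖ζ‖) (hlμ : ‖l μ‖ < 1) :
    ‖cv l ζ μ‖ ≤ 1 := by
  have hz : 1 ≤ Complex.normSq ζ := by
    rw [← Complex.sq_norm]; nlinarith
  have hp : Complex.normSq (l μ) ≤ 1 := by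
    rw [← Complex.sq_norm]; nlinarith [norm_nonneg (l μ)]
  have hd0 : 0 < ‖dv l ζ μ‖ := by
    rw [dv]
    have h1 : (1:ℝ) - ‖l μ‖ ≤ ‖ζ - l μ‖ := by
      have := norm_sub_norm_le ζ (l μ)
      linarith
    linarith
  have h2 : ‖1 - (starRingEnd ℂ) (l μ) * ζ‖ ≤ ‖dv l ζ μ‖ := by
    rw [Complex.norm_def, Complex.norm_def]
    apply Real.sqrt_le_sqrt
    have hkey : 0 ≤ (Complex.normSq ζ - 1) * (1 - Complex.normSq (l μ)) :=
      mul_nonneg (by linarith) (by linarith)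
    simp only [Complex.normSq_apply, dv, Complex.sub_re, Complex.sub_im, Complex.one_re,
      Complex.one_im, Complex.mul_re, Complex.mul_im, Complex.conj_re, Complex.conj_im] at hkey ⊢
    nlinarith [hkey]
  rw [cv, norm_mul, norm_inv]
  calc ‖1 - (starRingEnd ℂ) (l μ) * ζ‖ * (‖dv l ζ μ‖)⁻¹
      ≤ ‖dv l ζ μ‖ * (‖dv l ζ μ‖)⁻¹ :=
        mul_le_mul_of_nonneg_right h2 (inv_nonneg.mpr (le_of_lt hd0))
    _ = 1 := mul_inv_cancel₀ (ne_of_gt hd0)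

theorem stmt14 (n : ℕ) (hn : 1 ≤ n) (r : ℝ) (hr : r ∈ Set.Ioo (0 : ℝ) 1)
    (l : Fin n → ℂ) (hl : ∀ i, ‖l i‖ ≤ r)
    (M : Matrix (Fin n) (Fin n) ℂ)
    (hM : ∀ i j : Fin n, M i j =
      if (i : ℕ) < (j : ℕ) then 0
      else if (i : ℕ) = (j : ℕ) then l i
      else ((Real.sqrt (1 - ‖l i‖ ^ 2) : ℂ) *
          (Real.sqrt (1 - ‖l j‖ ^ 2) : ℂ)) *
        ∏ μ ∈ Finset.Ioo j i, (-(starRingEnd ℂ) (l μ)))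
    (ζ : ℂ) (hζ : 1 ≤ ‖ζ‖) :
    IsUnit (ζ • (1 : Matrix (Fin n) (Fin n) ℂ) - M) ∧
      (∀ i j : Fin n,
        ‖((ζ • (1 : Matrix (Fin n) (Fin n) ℂ) - M)⁻¹) i j‖ ≤
          (1 / (1 - r)) *
            (if (i : ℕ) < (j : ℕ) then 0 else if (i : ℕ) = (j : ℕ) then 1 else 1 + r)) ∧
      matNorm (ζ • (1 : Matrix (Fin n) (Fin n) ℂ) - M)⁻¹ ≤
        (1 / (1 - r)) * matNorm (Xmat n (1 + r)) := by
  obtain ⟨hr0, hr1⟩ := hr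
  have h1r : (0:ℝ) < 1 - r := by linarith
  have hl1 : ∀ i, ‖l i‖ < 1 := fun i => lt_of_le_of_lt (hl i) hr1
  have hdge : ∀ i, 1 - ‖l i‖ ≤ ‖dv l ζ i‖ := by
    intro i
    have := norm_sub_norm_le ζ (l i)
    rw [dv]; linarith
  have hdger : ∀ i, 1 - r ≤ ‖dv l ζ i‖ := fun i =>
    le_trans (by linarith [hl i]) (hdge i)
  have hdpos : ∀ i, 0 < ‖dv l ζ i‖ := fun i => lt_of_lt_of_le h1r (hdger i)
  have hd : ∀ i, dv l ζ i ≠ 0 := by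
    intro i h
    have := hdpos i
    rw [h] at this
    simp at this
  have hAB := AB_one l ζ M hM hd hl1
  have hBA : Bmat l ζ * (ζ • (1 : Matrix (Fin n) (Fin n) ℂ) - M) = 1 :=
    mul_eq_one_comm.mp hAB
  have hUnit : IsUnit (ζ • (1 : Matrix (Fin n) (Fin n) ℂ) - M) :=
    ⟨⟨_, Bmat l ζ, hAB, hBA⟩, rfl⟩
  have hInv : (ζ • (1 : Matrix (Fin n) (Fin n) ℂ) - M)⁻¹ = Bmat l ζ :=
    Matrix.inv_eq_right_inv hAB
  -- per-index factor bound
  have hsv0 : ∀ i, 0 ≤ sv l i := fun i => Real.sqrt_nonneg _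
  have hK0 : (0:ℝ) ≤ (1 + r) / (1 - r) := by positivity
  have hfac : ∀ i, sv l i * (‖dv l ζ i‖)⁻¹ ≤ Real.sqrt ((1 + r) / (1 - r)) := by
    intro i
    set a := ‖l i‖ with ha
    have ha0 : 0 ≤ a := norm_nonneg _
    have har : a ≤ r := hl i
    have h1a : (0:ℝ) < 1 - a := by linarith
    have step1 : sv l i * (‖dv l ζ i‖)⁻¹ ≤ Real.sqrt (1 - a ^ 2) * (1 - a)⁻¹ := by
      rw [sv, ← ha]
      apply mul_le_mul_of_nonneg_left _ (Real.sqrt_nonneg _)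
      exact inv_anti₀ h1a (hdge i)
    have step2 : Real.sqrt (1 - a ^ 2) * (1 - a)⁻¹ = Real.sqrt ((1 - a ^ 2) * ((1 - a)⁻¹) ^ 2) := by
      rw [Real.sqrt_mul (by nlinarith), Real.sqrt_sq (inv_nonneg.mpr (le_of_lt h1a))]
    have step3 : (1 - a ^ 2) * ((1 - a)⁻¹) ^ 2 ≤ (1 + r) / (1 - r) := by
      rw [div_eq_mul_inv]
      have he : (1 - a ^ 2) * ((1 - a)⁻¹) ^ 2 = (1 + a) * (1 - a)⁻¹ := by
        field_simp
        ring
      rw [he]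
      rw [← div_eq_mul_inv, ← div_eq_mul_inv, div_le_div_iff₀ h1a h1r]
      nlinarith
    calc sv l i * (‖dv l ζ i‖)⁻¹ ≤ Real.sqrt (1 - a ^ 2) * (1 - a)⁻¹ := step1
      _ = Real.sqrt ((1 - a ^ 2) * ((1 - a)⁻¹) ^ 2) := step2
      _ ≤ Real.sqrt ((1 + r) / (1 - r)) := Real.sqrt_le_sqrt step3
  -- entrywise bound on Bmat
  have hbound : ∀ i j : Fin n, ‖Bmat l ζ i j‖ ≤
      (1 / (1 - r)) * (if (i : ℕ) < (j : ℕ) then 0 else if (i : ℕ) = (j : ℕ) then 1 else 1 + r) := by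
    intro i j
    rw [Bmat_apply]
    by_cases h1 : (i : ℕ) < (j : ℕ)
    · rw [if_pos h1, if_pos h1]
      simp
    · rw [if_neg h1, if_neg h1]
      by_cases h2 : (i : ℕ) = (j : ℕ)
      · rw [if_pos h2, if_pos h2, norm_inv]
        rw [mul_one, one_div]
        exact inv_anti₀ h1r (hdger i)
      · rw [if_neg h2, if_neg h2]
        rw [norm_mul, norm_mul, norm_mul, norm_mul, norm_inv, norm_inv, Complex.norm_real,
          Complex.norm_real, Real.norm_of_nonneg (hsv0 i), Real.norm_of_nonneg (hsv0 j)]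
        have hprod : ‖∏ μ ∈ Finset.Ioo j i, cv l ζ μ‖ ≤ 1 := by
          rw [norm_prod]
          exact Finset.prod_le_one (fun μ _ => norm_nonneg _)
            (fun μ _ => cv_abs_le_one l ζ μ hζ (hl1 μ))
        have hmain : sv l i * sv l j * (‖dv l ζ i‖)⁻¹ * (‖dv l ζ j‖)⁻¹
            ≤ (1 + r) / (1 - r) := by
          have hx := hfac i
          have hy := hfac j
          have hxnn : 0 ≤ sv l i * (‖dv l ζ i‖)⁻¹ :=
            mul_nonneg (hsv0 i) (inv_nonneg.mpr (le_of_lt (hdpos i)))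
          have hynn : 0 ≤ sv l j * (‖dv l ζ j‖)⁻¹ :=
            mul_nonneg (hsv0 j) (inv_nonneg.mpr (le_of_lt (hdpos j)))
          have hsq : Real.sqrt ((1 + r) / (1 - r)) * Real.sqrt ((1 + r) / (1 - r))
              = (1 + r) / (1 - r) := Real.mul_self_sqrt hK0
          calc sv l i * sv l j * (‖dv l ζ i‖)⁻¹ * (‖dv l ζ j‖)⁻¹
              = (sv l i * (‖dv l ζ i‖)⁻¹) * (sv l j * (‖dv l ζ j‖)⁻¹) := by
                ring
            _ ≤ Real.sqrt ((1 + r) / (1 - r)) * Real.sqrt ((1 + r) / (1 - r)) :=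
                mul_le_mul hx hy hynn (Real.sqrt_nonneg _)
            _ = (1 + r) / (1 - r) := hsq
        have hfinal : (1 + r) / (1 - r) = 1 / (1 - r) * (1 + r) := by ring
        calc sv l i * sv l j * (‖dv l ζ i‖)⁻¹ * (‖dv l ζ j‖)⁻¹ *
              ‖∏ μ ∈ Finset.Ioo j i, cv l ζ μ‖
            ≤ sv l i * sv l j * (‖dv l ζ i‖)⁻¹ * (‖dv l ζ j‖)⁻¹ * 1 := by
              apply mul_le_mul_of_nonneg_left hprod
              exact mul_nonneg (mul_nonneg (mul_nonneg (hsv0 i) (hsv0 j))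
                (inv_nonneg.mpr (le_of_lt (hdpos i)))) (inv_nonneg.mpr (le_of_lt (hdpos j)))
          _ = sv l i * sv l j * (‖dv l ζ i‖)⁻¹ * (‖dv l ζ j‖)⁻¹ := by
              rw [mul_one]
          _ ≤ (1 + r) / (1 - r) := hmain
          _ = 1 / (1 - r) * (1 + r) := hfinal
  refine ⟨hUnit, ?_, ?_⟩
  · intro i j
    rw [hInv]
    exact hbound i j
  · rw [hInv]
    set S : Matrix (Fin n) (Fin n) ℝ := Matrix.of fun i j =>
      (1 / (1 - r)) * (if (i : ℕ) < (j : ℕ) then 0 else if (i : ℕ) = (j : ℕ) then 1 else 1 + r)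
      with hS
    have hSnn : ∀ i j, 0 ≤ S i j := by
      intro i j
      rw [hS]
      simp only [Matrix.of_apply]
      have : (0:ℝ) ≤ 1 / (1 - r) := by positivity
      split_ifs <;> nlinarith
    have hTS : ∀ i j, ‖Bmat l ζ i j‖ ≤ S i j := fun i j => hbound i j
    have hmap : S.map Complex.ofReal = ((1 / (1 - r) : ℝ) : ℂ) • Xmat n (1 + r) := by
      ext i j
      simp only [Matrix.map_apply, hS, Matrix.of_apply, Xmat, Matrix.smul_apply, smul_eq_mul]
      split_ifs <;> push_cast <;> ring
    have hnorm : matNorm (S.map Complex.ofReal) = (1 / (1 - r)) * matNorm (Xmat n (1 + r)) := by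
      rw [hmap]
      unfold matNorm
      rw [map_smul]
      rw [norm_smul ((1/(1-r):ℝ):ℂ) (Matrix.toEuclideanCLM (𝕜 := ℂ) (Xmat n (1+r)))]
      rw [Complex.norm_real, Real.norm_of_nonneg (by positivity : (0:ℝ) ≤ 1 / (1 - r))]
    calc matNorm (Bmat l ζ) ≤ matNorm (S.map Complex.ofReal) := matNorm_dom _ S hSnn hTS
      _ = (1 / (1 - r)) * matNorm (Xmat n (1 + r)) := hnorm
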